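/- Let C be a binary linear code of length n whose extended code C_ex is transitive invariant and all of whose codeword weights are divisible by 4. Then for even w, L_w(C) = ((n+1-w)/(n+1)) · L_w(C_ex). -/

import Mathlib

open Finset

/-- Support of a binary vector: the set of nonzero coordinates. -/
def supp {n : ℕ} (v : Fin n → ZMod 2) : Finset (Fin n) :=
  Finset.univ.filter fun i => v i ≠ 0

/-- Hamming weight. -/
def wt {n : ℕ} (v : Fin n → ZMod 2) : ℕ := (supp v).card

/-- A nonzero codeword of `D` is a zero neighbor (minimal codeword) if no nonzero
codeword of `D` has support strictly contained in its support. -/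
def IsZeroNeighbor {n : ℕ} (D : Set (Fin n → ZMod 2)) (v : Fin n → ZMod 2) : Prop :=
  v ∈ D ∧ v ≠ 0 ∧ ∀ v' ∈ D, v' ≠ 0 → ¬ supp v' ⊂ supp v

/-- `v` is decomposable in `D` if it is the sum of two nonzero codewords of `D`
with disjoint supports. -/
def Decomposable {n : ℕ} (D : Set (Fin n → ZMod 2)) (v : Fin n → ZMod 2) : Prop :=
  ∃ v1 v2, v1 ∈ D ∧ v2 ∈ D ∧ v1 ≠ 0 ∧ v2 ≠ 0 ∧
    Disjoint (supp v1) (supp v2) ∧ v = v1 + v2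

/-- Extension of a vector by its overall parity bit. -/
def extVec {n : ℕ} (v : Fin n → ZMod 2) : Fin (n + 1) → ZMod 2 :=
  Fin.snoc v (∑ i, v i)

/-- The extended code. -/
def extCode {n : ℕ} (C : Submodule (ZMod 2) (Fin n → ZMod 2)) :
    Set (Fin (n + 1) → ZMod 2) :=
  extVec '' (C : Set (Fin n → ZMod 2))

/-- An even-weight codeword is only-odd-decomposable if it is decomposable and in every
decomposition into nonzero disjoint-support codewords both parts have odd weight. -/
def OnlyOddDecomposable {n : ℕ} (C : Submodule (ZMod 2) (Fin n → ZMod 2))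
    (v : Fin n → ZMod 2) : Prop :=
  Even (wt v) ∧ Decomposable (C : Set (Fin n → ZMod 2)) v ∧
    ∀ v1 v2, v1 ∈ C → v2 ∈ C → v1 ≠ 0 → v2 ≠ 0 →
      Disjoint (supp v1) (supp v2) → v = v1 + v2 → Odd (wt v1) ∧ Odd (wt v2)

/-- `L_w(D)`: the number of zero neighbors of weight `w` in `D`. -/
noncomputable def Lw {n : ℕ} (D : Set (Fin n → ZMod 2)) (w : ℕ) : ℕ :=
  {v : Fin n → ZMod 2 | IsZeroNeighbor D v ∧ wt v = w}.ncard

/-- `N_w(C)`: the number of only-odd-decomposable codewords of weight `w` in `C`. -/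
noncomputable def Nw {n : ℕ} (C : Submodule (ZMod 2) (Fin n → ZMod 2)) (w : ℕ) : ℕ :=
  {v : Fin n → ZMod 2 | v ∈ C ∧ OnlyOddDecomposable C v ∧ wt v = w}.ncard

/-- Action of a coordinate permutation on a vector. -/
def permVec {n : ℕ} (π : Equiv.Perm (Fin n)) (v : Fin n → ZMod 2) : Fin n → ZMod 2 :=
  v ∘ π.symm

/-- `π` is an automorphism of the code `D`. -/
def IsAut {n : ℕ} (D : Set (Fin n → ZMod 2)) (π : Equiv.Perm (Fin n)) : Prop :=
  permVec π '' D = D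

/-- The even weight subcode of `C`, as a set. -/
def evenSub {n : ℕ} (C : Submodule (ZMod 2) (Fin n → ZMod 2)) :
    Set (Fin n → ZMod 2) :=
  {v : Fin n → ZMod 2 | v ∈ C ∧ Even (wt v)}

/-! ### Auxiliary lemmas -/

section Aux

lemma aux_mem_supp {n : ℕ} {v : Fin n → ZMod 2} {i : Fin n} : i ∈ supp v ↔ v i ≠ 0 := by
  simp [supp]

lemma aux_supp_eq_empty {n : ℕ} {v : Fin n → ZMod 2} : supp v = ∅ ↔ v = 0 := by
  constructor
  · intro h; funext i
    by_contra hi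
    exact absurd (aux_mem_supp.2 hi) (by simp [h])
  · rintro rfl; ext i; simp [supp]

lemma aux_wt_le {n : ℕ} (v : Fin n → ZMod 2) : wt v ≤ n := by
  simpa [wt, supp] using (Finset.card_filter_le Finset.univ fun i => v i ≠ 0)

lemma aux_zmod2_ne_zero {x : ZMod 2} (h : x ≠ 0) : x = 1 := by
  rcases (by decide : ∀ x : ZMod 2, x = 0 ∨ x = 1) x with h0 | h1
  · exact absurd h0 h
  · exact h1

lemma aux_sum_eq_wt {n : ℕ} (v : Fin n → ZMod 2) : ∑ i, v i = (wt v : ZMod 2) := by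
  classical
  rw [← Finset.sum_filter_ne_zero]
  have : ∀ i ∈ supp v, v i = 1 := fun i hi => aux_zmod2_ne_zero (aux_mem_supp.1 hi)
  rw [show (Finset.univ.filter fun i => v i ≠ 0) = supp v from rfl]
  rw [Finset.sum_congr rfl this]
  simp [wt]

lemma aux_extVec_castSucc {n : ℕ} (v : Fin n → ZMod 2) (i : Fin n) :
    extVec v (Fin.castSucc i) = v i := Fin.snoc_castSucc ..

lemma aux_extVec_last {n : ℕ} (v : Fin n → ZMod 2) :
    extVec v (Fin.last n) = (wt v : ZMod 2) := by
  rw [← aux_sum_eq_wt]; exact Fin.snoc_last ..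

lemma aux_extVec_eq_zero {n : ℕ} {v : Fin n → ZMod 2} (h : extVec v = 0) : v = 0 := by
  funext i
  have := congrFun h (Fin.castSucc i)
  rwa [aux_extVec_castSucc] at this

lemma aux_extVec_injective {n : ℕ} : Function.Injective (extVec (n := n)) := by
  intro v v' h
  funext i
  have := congrFun h (Fin.castSucc i)
  rwa [aux_extVec_castSucc, aux_extVec_castSucc] at this

lemma aux_natCast_zmod2_eq_zero {k : ℕ} : (k : ZMod 2) = 0 ↔ Even k := by
  rw [ZMod.natCast_eq_zero_iff]
  exact ⟨fun h => even_iff_two_dvd.2 h, fun h => even_iff_two_dvd.1 h⟩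

lemma aux_castSucc_mem_map {n : ℕ} {s : Finset (Fin n)} {i : Fin n} :
    Fin.castSucc i ∈ s.map Fin.castSuccEmb ↔ i ∈ s := by
  constructor
  · intro h
    obtain ⟨a, ha, hai⟩ := Finset.mem_map.1 h
    have : a = i := Fin.castSucc_injective n hai
    subst this; exact ha
  · intro h; exact Finset.mem_map_of_mem _ h

lemma aux_last_not_mem_map {n : ℕ} {s : Finset (Fin n)} :
    Fin.last n ∉ s.map Fin.castSuccEmb := by
  intro h
  obtain ⟨a, _, hai⟩ := Finset.mem_map.1 h
  exact absurd hai ((Fin.castSucc_lt_last a).ne : _)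

lemma aux_supp_extVec_even {n : ℕ} {v : Fin n → ZMod 2} (h : Even (wt v)) :
    supp (extVec v) = (supp v).map Fin.castSuccEmb := by
  ext j
  induction j using Fin.lastCases with
  | last =>
    have h1 : Fin.last n ∉ supp (extVec v) := by
      rw [aux_mem_supp, aux_extVec_last]
      simp [aux_natCast_zmod2_eq_zero.2 h]
    simp only [h1, false_iff]
    exact aux_last_not_mem_map
  | cast i =>
    rw [aux_castSucc_mem_map, aux_mem_supp, aux_extVec_castSucc, ← aux_mem_supp]

lemma aux_wt_extVec_even {n : ℕ} {v : Fin n → ZMod 2} (h : Even (wt v)) :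
    wt (extVec v) = wt v := by
  rw [wt, aux_supp_extVec_even h, Finset.card_map]; rfl

lemma aux_supp_extVec_odd {n : ℕ} {v : Fin n → ZMod 2} (h : ¬ Even (wt v)) :
    supp (extVec v) = insert (Fin.last n) ((supp v).map Fin.castSuccEmb) := by
  ext j
  induction j using Fin.lastCases with
  | last =>
    have h1 : Fin.last n ∈ supp (extVec v) := by
      rw [aux_mem_supp, aux_extVec_last]
      intro hc; exact h (aux_natCast_zmod2_eq_zero.1 hc)
    simp [h1]
  | cast i =>
    rw [Finset.mem_insert, aux_mem_supp, aux_extVec_castSucc]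
    constructor
    · intro hne
      exact Or.inr (aux_castSucc_mem_map.2 (aux_mem_supp.2 hne))
    · rintro (hc | hmem)
      · exact absurd hc ((Fin.castSucc_lt_last i).ne : _)
      · exact aux_mem_supp.1 (aux_castSucc_mem_map.1 hmem)

lemma aux_wt_extVec_odd {n : ℕ} {v : Fin n → ZMod 2} (h : ¬ Even (wt v)) :
    wt (extVec v) = wt v + 1 := by
  rw [wt, aux_supp_extVec_odd h, Finset.card_insert_of_notMem aux_last_not_mem_map,
    Finset.card_map]
  rfl

lemma aux_permVec_permVec_inv {n : ℕ} (π : Equiv.Perm (Fin n)) (v : Fin n → ZMod 2) :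
    permVec π⁻¹ (permVec π v) = v := by
  funext i; simp [permVec, Equiv.Perm.inv_def]

lemma aux_permVec_inv_permVec {n : ℕ} (π : Equiv.Perm (Fin n)) (v : Fin n → ZMod 2) :
    permVec π (permVec π⁻¹ v) = v := by
  funext i; simp [permVec, Equiv.Perm.inv_def]

lemma aux_supp_permVec {n : ℕ} (π : Equiv.Perm (Fin n)) (v : Fin n → ZMod 2) :
    supp (permVec π v) = (supp v).map π.toEmbedding := by
  ext i
  rw [aux_mem_supp]
  show v (π.symm i) ≠ 0 ↔ _
  constructor
  · intro h
    exact Finset.mem_map.2 ⟨π.symm i, aux_mem_supp.2 h, by simp⟩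
  · intro h
    obtain ⟨a, ha, hai⟩ := Finset.mem_map.1 h
    have : a = π.symm i := by
      have : π a = i := hai
      simp [← this]
    subst this; exact aux_mem_supp.1 ha

lemma aux_wt_permVec {n : ℕ} (π : Equiv.Perm (Fin n)) (v : Fin n → ZMod 2) :
    wt (permVec π v) = wt v := by
  rw [wt, aux_supp_permVec, Finset.card_map]; rfl

lemma aux_permVec_ne_zero {n : ℕ} {π : Equiv.Perm (Fin n)} {v : Fin n → ZMod 2}
    (h : v ≠ 0) : permVec π v ≠ 0 := by
  intro hc
  apply h
  have := congrArg (permVec π⁻¹) hc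
  rw [aux_permVec_permVec_inv] at this
  rw [this]
  funext i; rfl

lemma aux_isAut_mem {n : ℕ} {D : Set (Fin n → ZMod 2)} {π : Equiv.Perm (Fin n)}
    (h : IsAut D π) {u : Fin n → ZMod 2} (hu : u ∈ D) : permVec π u ∈ D := by
  rw [show D = permVec π '' D from h.symm]; exact ⟨u, hu, rfl⟩

lemma aux_isAut_inv {n : ℕ} {D : Set (Fin n → ZMod 2)} {π : Equiv.Perm (Fin n)}
    (h : IsAut D π) : IsAut D π⁻¹ := by
  rw [IsAut]
  ext u
  constructor
  · rintro ⟨x, hx, rfl⟩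
    rw [show D = permVec π '' D from h.symm] at hx
    obtain ⟨y, hy, rfl⟩ := hx
    rwa [aux_permVec_permVec_inv]
  · intro hu
    exact ⟨permVec π u, aux_isAut_mem h hu, aux_permVec_permVec_inv π u⟩

lemma aux_zn_permVec {n : ℕ} {D : Set (Fin n → ZMod 2)} {π : Equiv.Perm (Fin n)}
    (h : IsAut D π) {u : Fin n → ZMod 2} (hu : IsZeroNeighbor D u) :
    IsZeroNeighbor D (permVec π u) := by
  obtain ⟨hmem, hne, hmin⟩ := hu
  refine ⟨aux_isAut_mem h hmem, aux_permVec_ne_zero hne, ?_⟩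
  intro v' hv' hv'ne hss
  have hmem' : permVec π⁻¹ v' ∈ D := aux_isAut_mem (aux_isAut_inv h) hv'
  have hne' : permVec π⁻¹ v' ≠ 0 := aux_permVec_ne_zero hv'ne
  apply hmin _ hmem' hne'
  have h2 : supp u = (supp (permVec π u)).map π⁻¹.toEmbedding := by
    rw [← aux_permVec_permVec_inv π u, aux_supp_permVec, aux_permVec_inv_permVec]
  rw [h2, aux_supp_permVec]
  exact Finset.map_ssubset_map.2 hss

lemma aux_zmod2_add_eq_zero (x y : ZMod 2) : x + y = 0 ↔ x = y := by
  revert x y; decide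

lemma aux_supp_add_of_subset {n : ℕ} {v v' : Fin n → ZMod 2} (h : supp v' ⊆ supp v) :
    supp (v + v') = supp v \ supp v' := by
  ext i
  rw [aux_mem_supp, Finset.mem_sdiff, aux_mem_supp, aux_mem_supp]
  show ¬ (v i + v' i = 0) ↔ _
  rw [aux_zmod2_add_eq_zero]
  by_cases hv' : v' i = 0
  · simp [hv']
  · have hv : v i ≠ 0 := aux_mem_supp.1 (h (aux_mem_supp.2 hv'))
    simp [aux_zmod2_ne_zero hv, aux_zmod2_ne_zero hv', hv']

lemma aux_extVec_zero {n : ℕ} : extVec (0 : Fin n → ZMod 2) = 0 := by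
  have h0 : wt (0 : Fin n → ZMod 2) = 0 := by
    rw [wt, Finset.card_eq_zero, aux_supp_eq_empty]
  funext j
  induction j using Fin.lastCases with
  | last => rw [aux_extVec_last, h0]; rfl
  | cast i => rw [aux_extVec_castSucc]; rfl

lemma aux_zn_ext {n : ℕ} {C : Submodule (ZMod 2) (Fin n → ZMod 2)}
    {v : Fin n → ZMod 2} (hev : Even (wt v))
    (hzn : IsZeroNeighbor (C : Set (Fin n → ZMod 2)) v) :
    IsZeroNeighbor (extCode C) (extVec v) := by
  obtain ⟨hv, hne, hmin⟩ := hzn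
  refine ⟨⟨v, hv, rfl⟩, fun hc => hne (aux_extVec_eq_zero hc), ?_⟩
  rintro u' ⟨v', hv', rfl⟩ hu'ne hss
  have hlast : Fin.last n ∉ supp (extVec v') := by
    intro hmem
    have := hss.subset hmem
    rw [aux_supp_extVec_even hev] at this
    exact aux_last_not_mem_map this
  have hev' : Even (wt v') := by
    by_contra hodd
    apply hlast
    rw [aux_supp_extVec_odd hodd]
    exact Finset.mem_insert_self _ _
  have hv'ne : v' ≠ 0 := fun hc => hu'ne (by rw [hc, aux_extVec_zero])
  apply hmin v' hv' hv'ne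
  rw [aux_supp_extVec_even hev', aux_supp_extVec_even hev] at hss
  exact Finset.map_ssubset_map.1 hss

lemma aux_zn_ext_rev {n : ℕ} {C : Submodule (ZMod 2) (Fin n → ZMod 2)}
    (h4 : ∀ u ∈ extCode C, 4 ∣ wt u)
    {v : Fin n → ZMod 2} (hv : v ∈ C) (hev : Even (wt v))
    (hzn : IsZeroNeighbor (extCode C) (extVec v)) :
    IsZeroNeighbor (C : Set (Fin n → ZMod 2)) v := by
  obtain ⟨_, hne, hmin⟩ := hzn
  refine ⟨hv, fun hc => hne (by rw [hc, aux_extVec_zero]), ?_⟩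
  intro v' hv' hv'ne hss
  by_cases hev' : Even (wt v')
  · apply hmin (extVec v') ⟨v', hv', rfl⟩
      (fun hc => hv'ne (aux_extVec_eq_zero hc))
    rw [aux_supp_extVec_even hev', aux_supp_extVec_even hev]
    exact Finset.map_ssubset_map.2 hss
  · -- odd-weight subcodeword: contradiction with doubly-evenness
    have hsub : supp v' ⊆ supp v := hss.subset
    have hvv : v + v' ∈ C := C.add_mem hv hv'
    have hsupp2 : supp (v + v') = supp v \ supp v' := aux_supp_add_of_subset hsub
    have hwt2 : wt (v + v') = wt v - wt v' := by
      rw [wt, hsupp2, Finset.card_sdiff_of_subset hsub]; rfl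
    have hle : wt v' ≤ wt v := Finset.card_le_card hsub
    have hev2 : ¬ Even (wt (v + v')) := by
      rw [hwt2, Nat.even_sub hle]
      simp [hev, hev']
    have hd1 : 4 ∣ wt v' + 1 := by
      have := h4 (extVec v') ⟨v', hv', rfl⟩
      rwa [aux_wt_extVec_odd hev'] at this
    have hd2 : 4 ∣ (wt v - wt v') + 1 := by
      have := h4 (extVec (v + v')) ⟨v + v', hvv, rfl⟩
      rwa [aux_wt_extVec_odd hev2, hwt2] at this
    have hd0 : 4 ∣ wt v := by
      have := h4 (extVec v) ⟨v, hv, rfl⟩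
      rwa [aux_wt_extVec_even hev] at this
    omega

end Aux

theorem lwd_even_from_extended_doubly_even {n : ℕ}
    (C : Submodule (ZMod 2) (Fin n → ZMod 2))
    (htrans : ∀ i j : Fin (n + 1), ∃ π : Equiv.Perm (Fin (n + 1)),
      IsAut (extCode C) π ∧ π i = j)
    (h4 : ∀ u ∈ extCode C, 4 ∣ wt u)
    (w : ℕ) (hw : Even w) :
    (Lw (C : Set (Fin n → ZMod 2)) w : ℚ) =
      (((n : ℚ) + 1 - w) / (n + 1)) * Lw (extCode C) w := by
  classical
  set S : Set (Fin (n + 1) → ZMod 2) :=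
    {u | IsZeroNeighbor (extCode C) u ∧ wt u = w} with hS
  have hfin : S.Finite := Set.toFinite _
  set T := hfin.toFinset with hT
  have hmemT : ∀ u, u ∈ T ↔ IsZeroNeighbor (extCode C) u ∧ wt u = w := by
    intro u; rw [hT, Set.Finite.mem_toFinset]; rfl
  have hTcard : Lw (extCode C) w = T.card := by
    rw [Lw, Set.ncard_eq_toFinset_card _ hfin]
  -- Step 1: Lw C w equals the number of weight-w zero neighbors of extCode C
  -- vanishing at the last coordinate.
  have himg : extVec '' {v | IsZeroNeighbor (C : Set (Fin n → ZMod 2)) v ∧ wt v = w}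
      = {u | (IsZeroNeighbor (extCode C) u ∧ wt u = w) ∧ u (Fin.last n) = 0} := by
    ext u
    constructor
    · rintro ⟨v, ⟨hzn, hwt⟩, rfl⟩
      have hev : Even (wt v) := hwt ▸ hw
      refine ⟨⟨aux_zn_ext hev hzn, ?_⟩, ?_⟩
      · rw [aux_wt_extVec_even hev, hwt]
      · rw [aux_extVec_last, aux_natCast_zmod2_eq_zero]; exact hev
    · rintro ⟨⟨hzn, hwt⟩, hlast⟩
      obtain ⟨v, hv, rfl⟩ := hzn.1
      have hev : Even (wt v) := by
        rw [aux_extVec_last, aux_natCast_zmod2_eq_zero] at hlast; exact hlast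
      refine ⟨v, ⟨aux_zn_ext_rev h4 hv hev hzn, ?_⟩, rfl⟩
      rwa [aux_wt_extVec_even hev] at hwt
  have key1 : Lw (C : Set (Fin n → ZMod 2)) w
      = (T.filter fun u => u (Fin.last n) = 0).card := by
    have hset : ((T.filter fun u => u (Fin.last n) = 0 : Finset _) : Set _)
        = {u | (IsZeroNeighbor (extCode C) u ∧ wt u = w) ∧ u (Fin.last n) = 0} := by
      ext u
      simp only [Finset.coe_filter, Set.mem_setOf_eq, hmemT u]
    rw [Lw, ← Set.ncard_image_of_injective _ aux_extVec_injective, himg, ← hset,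
      Set.ncard_coe_finset]
  -- Step 2: the counts at each coordinate agree (transitivity).
  have key2 : ∀ i j : Fin (n + 1),
      (T.filter fun u => u i = 0).card = (T.filter fun u => u j = 0).card := by
    intro i j
    obtain ⟨π, haut, hπ⟩ := htrans i j
    refine Finset.card_bij' (fun u _ => permVec π u) (fun u _ => permVec π⁻¹ u) ?_ ?_ ?_ ?_
    · intro u hu
      rw [Finset.mem_filter, hmemT] at hu ⊢
      obtain ⟨⟨hzn, hwt⟩, hzero⟩ := hu
      refine ⟨⟨aux_zn_permVec haut hzn, by rw [aux_wt_permVec, hwt]⟩, ?_⟩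
      show u (π.symm j) = 0
      rwa [← hπ, Equiv.symm_apply_apply]
    · intro u hu
      rw [Finset.mem_filter, hmemT] at hu ⊢
      obtain ⟨⟨hzn, hwt⟩, hzero⟩ := hu
      refine ⟨⟨aux_zn_permVec (aux_isAut_inv haut) hzn, by rw [aux_wt_permVec, hwt]⟩, ?_⟩
      show u ((π⁻¹).symm i) = 0
      rw [Equiv.Perm.inv_def, Equiv.symm_symm, hπ]
      exact hzero
    · intro u _; exact aux_permVec_permVec_inv π u
    · intro u _; exact aux_permVec_inv_permVec π u
  -- Step 3: double counting.
  have hwt_each : ∀ u ∈ T, (Finset.univ.filter fun i => u i = 0).card = n + 1 - w := by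
    intro u hu
    have hwu : wt u = w := ((hmemT u).1 hu).2
    have hcompl : (Finset.univ.filter fun i => u i = 0) = (supp u)ᶜ := by
      ext i; simp [supp]
    rw [hcompl, Finset.card_compl, Fintype.card_fin]
    rw [show (supp u).card = wt u from rfl, hwu]
  have key3 : (n + 1) * (T.filter fun u => u (Fin.last n) = 0).card
      = T.card * (n + 1 - w) := by
    have hsum : ∑ i : Fin (n + 1), (T.filter fun u => u i = 0).card
        = T.card * (n + 1 - w) := by
      have h1 : ∀ i : Fin (n + 1), (T.filter fun u => u i = 0).card
          = ∑ u ∈ T, if u i = 0 then 1 else 0 := by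
        intro i; rw [Finset.card_filter]
      calc ∑ i : Fin (n + 1), (T.filter fun u => u i = 0).card
          = ∑ i : Fin (n + 1), ∑ u ∈ T, if u i = 0 then 1 else 0 := by
            exact Finset.sum_congr rfl fun i _ => h1 i
        _ = ∑ u ∈ T, ∑ i : Fin (n + 1), if u i = 0 then 1 else 0 := Finset.sum_comm
        _ = ∑ u ∈ T, (Finset.univ.filter fun i => u i = 0).card := by
            exact Finset.sum_congr rfl fun u _ => (Finset.card_filter _ _).symm
        _ = ∑ u ∈ T, (n + 1 - w) := Finset.sum_congr rfl hwt_each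
        _ = T.card * (n + 1 - w) := by rw [Finset.sum_const, smul_eq_mul]
    have hconst : ∑ i : Fin (n + 1), (T.filter fun u => u i = 0).card
        = (n + 1) * (T.filter fun u => u (Fin.last n) = 0).card := by
      rw [Finset.sum_congr rfl fun i _ => key2 i (Fin.last n)]
      rw [Finset.sum_const, Finset.card_univ, Fintype.card_fin, smul_eq_mul]
    rw [← hconst, hsum]
  -- Conclusion.
  rw [hTcard, key1]
  by_cases hB : T.card = 0
  · have hA : (T.filter fun u => u (Fin.last n) = 0).card = 0 := by
      have h := Finset.card_filter_le T fun u => u (Fin.last n) = 0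
      rw [hB] at h
      exact Nat.eq_zero_of_le_zero h
    rw [hA, hB]; simp
  · obtain ⟨u, hu⟩ := Finset.card_pos.1 (Nat.pos_of_ne_zero hB)
    have hwle : w ≤ n + 1 := by
      have h1 : wt u = w := ((hmemT u).1 hu).2
      have h2 : wt u ≤ n + 1 := aux_wt_le u
      rw [h1] at h2
      exact h2
    have hq := congrArg (fun k : ℕ => (k : ℚ)) key3
    push_cast [Nat.cast_sub hwle] at hq
    have hn0 : ((n : ℚ) + 1) ≠ 0 := by positivity
    field_simp
    linarith [hq]
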